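/- Toy model adversarial vulnerability: In the setting of the toy model (Y uniform on {±1}, Xʲ ∼ N(ηY,1) i.i.d. for j ≥ 2, w = (0, 1/(p−1),…,1/(p−1)), h(x) = sign(wᵀx)), the ℓ_∞ adversarial accuracy at tolerance ε ≥ η satisfies acc_ε(h) = P( inf_{‖Δ‖_∞ ≤ ε} Y·wᵀ(X+Δ) ≥ 0 ) = P(N(0, 1/(p−1)) ≥ ε − η) ≤ exp(−(p−1)(ε−η)²/2). In particular acc_ε(h) ≤ δ whenever ε ≥ η + √(2·log(1/δ)/(p−1)). -/

import Mathlib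

open MeasureTheory ProbabilityTheory
open scoped ENNReal NNReal
open Real

/-- Conditional feature distribution of the toy model given label `y ∈ {±1}`. -/
noncomputable def toyCond (p : ℕ) (η y : ℝ) : Measure (Fin p → ℝ) :=
  Measure.pi fun j =>
    if (j : ℕ) = 0 then (7 / 10 : ℝ≥0∞) • Measure.dirac y + (3 / 10 : ℝ≥0∞) • Measure.dirac (-y)
    else gaussianReal (η * y) 1

/-- Joint distribution of `(X, Y)` in the toy model, with `Y` uniform on `{±1}`. -/
noncomputable def toyJoint (p : ℕ) (η : ℝ) : Measure ((Fin p → ℝ) × ℝ) :=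
  (1 / 2 : ℝ≥0∞) • ((toyCond p η 1).map (fun x => (x, (1 : ℝ)))
    + (toyCond p η (-1)).map (fun x => (x, (-1 : ℝ))))

/-- The averaging weight vector `w = (0, 1/(p−1), …, 1/(p−1))`. -/
noncomputable def toyW (p : ℕ) : Fin p → ℝ :=
  fun j => if (j : ℕ) = 0 then 0 else 1 / ((p : ℝ) - 1)


lemma integrable_exp_quad {b : ℝ} (hb : 0 < b) (c d : ℝ) :
    Integrable (fun x : ℝ => rexp (-b * x ^ 2 + c * x + d)) := by
  have h : ∀ x : ℝ, -b * x ^ 2 + c * x + d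
      = -b * (x - c / (2 * b)) ^ 2 + (d + c ^ 2 / (4 * b)) := by
    intro x; field_simp; ring
  simp_rw [h, Real.exp_add]
  exact ((integrable_exp_neg_mul_sq hb).comp_sub_right (c / (2 * b))).mul_const _

lemma integral_exp_quad {b : ℝ} (hb : 0 < b) (c d : ℝ) :
    ∫ x : ℝ, rexp (-b * x ^ 2 + c * x + d)
      = Real.sqrt (π / b) * rexp (d + c ^ 2 / (4 * b)) := by
  have h : ∀ x : ℝ, -b * x ^ 2 + c * x + d
      = -b * (x - c / (2 * b)) ^ 2 + (d + c ^ 2 / (4 * b)) := by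
    intro x; field_simp; ring
  simp_rw [h, Real.exp_add]
  rw [MeasureTheory.integral_mul_const, integral_sub_right_eq_self (μ := volume) (fun x => rexp (-b * x ^ 2)) (c / (2*b)),
    integral_gaussian]

open ProbabilityTheory


open ProbabilityTheory

lemma nnpos {u : ℝ≥0} (hu : u ≠ 0) : (0:ℝ) < (u:ℝ) := by
  exact_mod_cast pos_iff_ne_zero.mpr hu

lemma pdf_conv_aux {u v : ℝ≥0} (hu : u ≠ 0) (hv : v ≠ 0) (a b y : ℝ) :
    (fun x : ℝ => gaussianPDFReal a u x * gaussianPDFReal (b + x) v y)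
      = fun x : ℝ => ((√(2 * π * u))⁻¹ * (√(2 * π * v))⁻¹) *
          rexp (-(1 / (2 * u) + 1 / (2 * v)) * x ^ 2
            + (a / u + (y - b) / v) * x
            + (-(a ^ 2) / (2 * u) - (y - b) ^ 2 / (2 * v))) := by
  have hu' := nnpos hu
  have hv' := nnpos hv
  funext x
  rw [gaussianPDFReal, gaussianPDFReal]
  rw [show ((√(2 * π * u))⁻¹ * rexp (-(x - a) ^ 2 / (2 * u)) *
      ((√(2 * π * v))⁻¹ * rexp (-(y - (b + x)) ^ 2 / (2 * v))))
    = ((√(2 * π * u))⁻¹ * (√(2 * π * v))⁻¹) *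
      (rexp (-(x - a) ^ 2 / (2 * u)) * rexp (-(y - (b + x)) ^ 2 / (2 * v))) by ring,
    ← Real.exp_add]
  congr 1
  field_simp
  ring

lemma integrable_pdf_conv {u v : ℝ≥0} (hu : u ≠ 0) (hv : v ≠ 0) (a b y : ℝ) :
    Integrable (fun x : ℝ => gaussianPDFReal a u x * gaussianPDFReal (b + x) v y) := by
  have hu' := nnpos hu
  have hv' := nnpos hv
  rw [pdf_conv_aux hu hv a b y]
  exact (integrable_exp_quad (by positivity) _ _).const_mul _

lemma integral_pdf_conv {u v : ℝ≥0} (hu : u ≠ 0) (hv : v ≠ 0) (a b y : ℝ) :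
    ∫ x : ℝ, gaussianPDFReal a u x * gaussianPDFReal (b + x) v y
      = gaussianPDFReal (a + b) (u + v) y := by
  have hu' := nnpos hu
  have hv' := nnpos hv
  rw [pdf_conv_aux hu hv a b y, MeasureTheory.integral_const_mul,
    integral_exp_quad (by positivity) _ _, gaussianPDFReal]
  have hBpos : (0:ℝ) < 1 / (2 * u) + 1 / (2 * v) := by positivity
  have hconst : (√(2 * π * u))⁻¹ * (√(2 * π * v))⁻¹ * √(π / (1 / (2 * u) + 1 / (2 * v)))
      = (√(2 * π * (u + v)))⁻¹ := by
    have hkey : √(π / (1 / (2 * u) + 1 / (2 * v))) * √(2 * π * ((u:ℝ) + v))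
        = √(2 * π * u) * √(2 * π * v) := by
      rw [← Real.sqrt_mul (by positivity), ← Real.sqrt_mul (by positivity)]
      congr 1
      field_simp
      ring
    have h1 : (0:ℝ) < √(2 * π * u) := Real.sqrt_pos.mpr (by positivity)
    have h2 : (0:ℝ) < √(2 * π * v) := Real.sqrt_pos.mpr (by positivity)
    have h3 : (0:ℝ) < √(2 * π * ((u:ℝ) + v)) := Real.sqrt_pos.mpr (by positivity)
    have habs : ∀ {A B C D : ℝ}, 0 < A → 0 < B → 0 < D → C * D = A * B →
        A⁻¹ * B⁻¹ * C = D⁻¹ := by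
      intro A B C D hA hB hD h
      field_simp
      linarith [h]
    exact habs h1 h2 h3 hkey
  have hexp : (-(a ^ 2) / (2 * u) - (y - b) ^ 2 / (2 * v))
      + (a / u + (y - b) / v) ^ 2 / (4 * (1 / (2 * u) + 1 / (2 * v)))
      = -(y - (a + b)) ^ 2 / (2 * ((u:ℝ) + v)) := by
    field_simp
    ring
  push_cast [NNReal.coe_add] at *
  rw [show ((√(2 * π * u))⁻¹ * (√(2 * π * v))⁻¹) * (√(π / (1 / (2 * u) + 1 / (2 * v)))
      * rexp (-(a ^ 2) / (2 * u) - (y - b) ^ 2 / (2 * v)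
        + (a / u + (y - b) / v) ^ 2 / (4 * (1 / (2 * u) + 1 / (2 * v)))))
    = ((√(2 * π * u))⁻¹ * (√(2 * π * v))⁻¹ * √(π / (1 / (2 * u) + 1 / (2 * v))))
      * rexp (-(a ^ 2) / (2 * u) - (y - b) ^ 2 / (2 * v)
        + (a / u + (y - b) / v) ^ 2 / (4 * (1 / (2 * u) + 1 / (2 * v)))) by ring,
    hconst, hexp]

lemma gaussianPDF_def' (m : ℝ) (v : ℝ≥0) (x : ℝ) :
    gaussianPDF m v x = ENNReal.ofReal (gaussianPDFReal m v x) := rfl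

lemma gauss_conv (a b : ℝ) {u : ℝ≥0} (hu : u ≠ 0) (v : ℝ≥0) :
    ((gaussianReal a u).prod (gaussianReal b v)).map (fun z : ℝ × ℝ => z.1 + z.2)
      = gaussianReal (a + b) (u + v) := by
  by_cases hv : v = 0
  · subst hv
    rw [gaussianReal_zero_var, MeasureTheory.Measure.prod_dirac,
      Measure.map_map (by measurability) (by measurability)]
    have : ((fun z : ℝ × ℝ => z.1 + z.2) ∘ fun x : ℝ => (x, b)) = (· + b) := rfl
    rw [this, gaussianReal_map_add_const, add_zero]
  · ext s hs
    rw [Measure.map_apply (by measurability) hs,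
      Measure.prod_apply (hs.preimage (by measurability))]
    have h1 : ∀ x : ℝ, (Prod.mk x ⁻¹' ((fun z : ℝ × ℝ => z.1 + z.2) ⁻¹' s))
        = (fun y => x + y) ⁻¹' s := fun x => rfl
    have h2 : ∀ x : ℝ, gaussianReal b v ((fun y => x + y) ⁻¹' s)
        = ∫⁻ y in s, gaussianPDF (b + x) v y := by
      intro x
      rw [← Measure.map_apply (measurable_const_add x) hs, gaussianReal_map_const_add,
        gaussianReal_apply _ hv]
    simp_rw [h1, h2]
    have hmeas : Measurable (Function.uncurry fun x y : ℝ =>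
        gaussianPDF a u x * gaussianPDF (b + x) v y) := by
      apply Measurable.mul (f := fun z : ℝ × ℝ => gaussianPDF a u z.1)
        (g := fun z : ℝ × ℝ => gaussianPDF (b + z.1) v z.2)
      · exact ((measurable_gaussianPDFReal a u).comp measurable_fst).ennreal_ofReal
      · unfold gaussianPDF gaussianPDFReal
        apply Measurable.ennreal_ofReal
        apply Measurable.const_mul
        apply Real.measurable_exp.comp
        apply Measurable.div_const
        apply Measurable.neg
        apply Measurable.pow_const
        exact measurable_snd.sub (measurable_const.add measurable_fst)
    rw [gaussianReal_of_var_ne_zero a hu,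
      lintegral_withDensity_eq_lintegral_mul _ (measurable_gaussianPDF a u)
        (by exact Measurable.lintegral_prod_right (f := fun x y : ℝ =>
              gaussianPDF (b + x) v y) (by
            unfold gaussianPDF gaussianPDFReal
            apply Measurable.ennreal_ofReal
            apply Measurable.const_mul
            apply Real.measurable_exp.comp
            apply Measurable.div_const
            apply Measurable.neg
            apply Measurable.pow_const
            exact measurable_snd.sub (measurable_const.add measurable_fst)))]
    simp only [Pi.mul_apply]
    have h3 : ∀ x, gaussianPDF a u x * ∫⁻ y in s, gaussianPDF (b + x) v y
        = ∫⁻ y in s, gaussianPDF a u x * gaussianPDF (b + x) v y := fun x =>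
      (lintegral_const_mul _ ((measurable_gaussianPDFReal _ _).ennreal_ofReal)).symm
    simp_rw [h3]
    rw [lintegral_lintegral_swap hmeas.aemeasurable]
    have h4 : ∀ y, ∫⁻ x, gaussianPDF a u x * gaussianPDF (b + x) v y
        = gaussianPDF (a + b) (u + v) y := by
      intro y
      simp_rw [gaussianPDF_def', ← ENNReal.ofReal_mul (gaussianPDFReal_nonneg a u _)]
      rw [← ofReal_integral_eq_lintegral_ofReal (integrable_pdf_conv hu hv a b y)
        (Filter.Eventually.of_forall fun x =>
          mul_nonneg (gaussianPDFReal_nonneg _ _ _) (gaussianPDFReal_nonneg _ _ _)),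
        integral_pdf_conv hu hv a b y]
    simp_rw [h4]
    rw [← gaussianReal_apply _ (by simp [hu]) s]

lemma pi_gauss_sum (m : ℝ) : ∀ n : ℕ,
    (Measure.pi fun _ : Fin n => gaussianReal m 1).map (fun x => ∑ j, x j)
      = gaussianReal (n * m) (n : ℝ≥0)
  | 0 => by
    have : (fun x : Fin 0 → ℝ => ∑ j, x j) = fun _ => (0 : ℝ) := by
      funext x; simp
    rw [this, Measure.map_const]
    simp [gaussianReal_zero_var]
  | (n + 1) => by
    have IH := pi_gauss_sum m n
    have hmp := measurePreserving_piFinSuccAbove (fun _ : Fin (n + 1) => gaussianReal m 1) 0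
    set e := MeasurableEquiv.piFinSuccAbove (fun _ : Fin (n + 1) => ℝ) 0
    have hg : Measurable (fun z : ℝ × (Fin n → ℝ) => z.1 + ∑ j, z.2 j) := by
      apply measurable_fst.add
      exact Finset.measurable_sum _ fun j _ => (measurable_pi_apply j).comp measurable_snd
    have hsum : (fun x : Fin (n + 1) → ℝ => ∑ j, x j)
        = (fun z : ℝ × (Fin n → ℝ) => z.1 + ∑ j, z.2 j) ∘ e := by
      funext x
      simp [e, MeasurableEquiv.piFinSuccAbove_apply, Fin.removeNth, Fin.sum_univ_succ,
        Fin.succAbove, Fin.tail]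
    rw [hsum, ← Measure.map_map hg e.measurable, hmp.map_eq]
    have hsplit : (fun z : ℝ × (Fin n → ℝ) => z.1 + ∑ j, z.2 j)
        = (fun w : ℝ × ℝ => w.1 + w.2) ∘ Prod.map id (fun x : Fin n → ℝ => ∑ j, x j) := rfl
    rw [hsplit, ← Measure.map_map (by measurability)
        (measurable_id.prodMap (Finset.measurable_sum _ fun j _ => measurable_pi_apply j)),
      ← Measure.map_prod_map _ _ measurable_id
        (Finset.measurable_sum _ fun j _ => measurable_pi_apply j),
      Measure.map_id, IH, gauss_conv _ _ one_ne_zero]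
    congr 1
    · push_cast; ring
    · push_cast; ring


lemma mix_prob (y : ℝ) : IsProbabilityMeasure
    ((7 / 10 : ℝ≥0∞) • Measure.dirac y + (3 / 10 : ℝ≥0∞) • Measure.dirac (-y)) := by
  constructor
  simp only [Measure.add_apply, Measure.smul_apply, measure_univ, smul_eq_mul, mul_one]
  rw [ENNReal.div_add_div_same, show (7 : ℝ≥0∞) + 3 = 10 by norm_num]
  exact ENNReal.div_self (by norm_num) (by norm_num)

lemma toyCond_prob (p : ℕ) (η y : ℝ) : IsProbabilityMeasure (toyCond p η y) := by
  unfold toyCond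
  haveI : ∀ j : Fin p, IsProbabilityMeasure (if (j : ℕ) = 0
      then (7 / 10 : ℝ≥0∞) • Measure.dirac y + (3 / 10 : ℝ≥0∞) • Measure.dirac (-y)
      else gaussianReal (η * y) 1) := by
    intro j
    split
    · exact mix_prob y
    · infer_instance
  infer_instance

lemma toyCond_map (n : ℕ) (hn : n ≠ 0) (η y : ℝ) (hy : y = 1 ∨ y = -1) :
    (toyCond (n + 1) η y).map (fun x => y * ∑ j, toyW (n + 1) j * x j)
      = gaussianReal η ((n : ℝ≥0))⁻¹ := by
  have hy2 : y ^ 2 = 1 := by rcases hy with h | h <;> rw [h] <;> norm_num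
  have hn' : (0 : ℝ) < n := by exact_mod_cast Nat.pos_of_ne_zero hn
  set F : Fin (n + 1) → Measure ℝ := fun j =>
    if (j : ℕ) = 0 then (7 / 10 : ℝ≥0∞) • Measure.dirac y + (3 / 10 : ℝ≥0∞) • Measure.dirac (-y)
    else gaussianReal (η * y) 1 with hF
  haveI : ∀ j, IsProbabilityMeasure (F j) := by
    intro j
    rw [hF]
    dsimp only
    split
    · exact mix_prob y
    · infer_instance
  have hmp := measurePreserving_piFinSuccAbove F 0
  set e := MeasurableEquiv.piFinSuccAbove (fun _ : Fin (n + 1) => ℝ) 0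
  have htail : (Measure.pi fun j : Fin n => F ((0 : Fin (n + 1)).succAbove j))
      = Measure.pi fun _ : Fin n => gaussianReal (η * y) 1 := by
    congr 1
  have hsum : (fun x : Fin (n + 1) → ℝ => y * ∑ j, toyW (n + 1) j * x j)
      = ((fun t : ℝ => (y / n) * t)
          ∘ (fun x : Fin n → ℝ => ∑ j, x j) ∘ Prod.snd) ∘ e := by
    funext x
    have hex : (e x).2 = fun j : Fin n => x j.succ := by
      funext j
      simp [e, MeasurableEquiv.piFinSuccAbove_apply, Fin.removeNth, Fin.succAbove_zero,
        Fin.tail]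
    simp only [Function.comp_apply, hex]
    rw [Fin.sum_univ_succ]
    simp only [toyW, Fin.val_zero, if_pos, Fin.val_succ, if_neg (Nat.succ_ne_zero _),
      zero_mul, zero_add]
    rw [Finset.mul_sum, Finset.mul_sum]
    refine Finset.sum_congr rfl fun j _ => ?_
    push_cast
    rw [add_sub_cancel_right]
    ring
  rw [hsum, ← Measure.map_map (by fun_prop) e.measurable]
  unfold toyCond
  rw [← hF, hmp.map_eq,
    ← Measure.map_map (measurable_const_mul _) (by fun_prop),
    ← Measure.map_map (by fun_prop) measurable_snd]
  have : Measure.map Prod.snd ((F 0).prod (Measure.pi fun j : Fin n => F ((0:Fin (n+1)).succAbove j)))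
      = Measure.pi fun _ : Fin n => gaussianReal (η * y) 1 := by
    rw [htail, Measure.map_snd_prod, measure_univ, one_smul]
  rw [this, pi_gauss_sum, gaussianReal_map_const_mul]
  congr 1
  · field_simp
    rcases hy with h | h <;> rw [h] <;> ring
  · ext
    push_cast
    rw [div_pow, hy2]
    field_simp

lemma gauss_tail {v : ℝ≥0} (hv : v ≠ 0) {t : ℝ} (ht : 0 ≤ t) :
    (gaussianReal 0 v (Set.Ici t)).toReal ≤ rexp (-t ^ 2 / (2 * v)) := by
  have hv' := nnpos hv
  rw [gaussianReal_apply_eq_integral _ hv,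
    ENNReal.toReal_ofReal (setIntegral_nonneg measurableSet_Ici
      fun x _ => gaussianPDFReal_nonneg _ _ _)]
  set g : ℝ → ℝ := fun x =>
    (√(2 * π * v))⁻¹ * rexp (-(1 / (2 * v)) * x ^ 2 + (t / v) * x + (-(t ^ 2) / v)) with hg
  have hgint : Integrable g := (integrable_exp_quad (by positivity) _ _).const_mul _
  have hgnonneg : ∀ x, 0 ≤ g x := fun x => by rw [hg]; positivity
  have hle : ∀ x ∈ Set.Ici t, gaussianPDFReal 0 v x ≤ g x := by
    intro x hx
    rw [hg, gaussianPDFReal]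
    apply mul_le_mul_of_nonneg_left _ (by positivity)
    apply Real.exp_le_exp.mpr
    rw [Set.mem_Ici] at hx
    have h1 : 0 ≤ t * (x - t) / v := div_nonneg (mul_nonneg ht (by linarith)) hv'.le
    rw [sub_zero]
    have h2 : -(1 / (2 * (v:ℝ))) * x ^ 2 + t / v * x + -(t ^ 2) / v - (-x ^ 2 / (2 * v))
        = t * (x - t) / v := by field_simp; ring
    linarith
  calc ∫ x in Set.Ici t, gaussianPDFReal 0 v x
      ≤ ∫ x in Set.Ici t, g x := by
        apply setIntegral_mono_on ((integrable_gaussianPDFReal 0 v).integrableOn)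
          hgint.integrableOn measurableSet_Ici hle
    _ ≤ ∫ x, g x := setIntegral_le_integral hgint
        (Filter.Eventually.of_forall hgnonneg)
    _ = rexp (-t ^ 2 / (2 * v)) := by
        rw [hg]
        rw [MeasureTheory.integral_const_mul, integral_exp_quad (by positivity) _ _]
        rw [show √(π / (1 / (2 * (v:ℝ)))) = √(2 * π * v) by congr 1; field_simp]
        rw [show (-(t ^ 2) / (v:ℝ) + (t / v) ^ 2 / (4 * (1 / (2 * v))))
            = -t ^ 2 / (2 * v) by field_simp; ring]
        have hs : (0:ℝ) < √(2 * π * v) := Real.sqrt_pos.mpr (by positivity)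
        field_simp

lemma toyW_sum (n : ℕ) (hn : n ≠ 0) : ∑ j, toyW (n + 1) j = 1 := by
  have hn' : (0:ℝ) < n := by exact_mod_cast Nat.pos_of_ne_zero hn
  rw [Fin.sum_univ_succ]
  simp only [toyW, Fin.val_zero, if_pos rfl, Fin.val_succ, if_neg (Nat.succ_ne_zero _),
    zero_add, Finset.sum_const, Finset.card_univ, Fintype.card_fin, nsmul_eq_mul]
  push_cast
  rw [add_sub_cancel_right]
  field_simp
  norm_num

lemma toyW_nonneg (n : ℕ) (j : Fin (n + 1)) : 0 ≤ toyW (n + 1) j := by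
  unfold toyW
  split
  · exact le_rfl
  · push_cast
    rw [add_sub_cancel_right]
    positivity

lemma set_eq (n : ℕ) (hn : n ≠ 0) (ε : ℝ) (hε0 : 0 ≤ ε) :
    {z : (Fin (n + 1) → ℝ) × ℝ | ∀ Δ : Fin (n + 1) → ℝ, (⨆ j, |Δ j|) ≤ ε →
        0 ≤ z.2 * ∑ j, toyW (n + 1) j * (z.1 j + Δ j)}
      = {z : (Fin (n + 1) → ℝ) × ℝ | |z.2| * ε ≤ z.2 * ∑ j, toyW (n + 1) j * z.1 j} := by
  have hW := toyW_sum n hn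
  ext z
  simp only [Set.mem_setOf_eq]
  have hexpand : ∀ Δ : Fin (n + 1) → ℝ, ∑ j, toyW (n + 1) j * (z.1 j + Δ j)
      = (∑ j, toyW (n + 1) j * z.1 j) + ∑ j, toyW (n + 1) j * Δ j := by
    intro Δ
    rw [← Finset.sum_add_distrib]
    exact Finset.sum_congr rfl fun j _ => by ring
  constructor
  · intro h
    set c : ℝ := if 0 ≤ z.2 then -ε else ε with hc
    have hcabs : |c| = ε := by
      rw [hc]; split <;> simp [abs_of_nonneg, abs_of_nonpos, hε0, neg_nonpos.mpr hε0]
    have hzc : z.2 * c = -(|z.2| * ε) := by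
      rw [hc]; split
      · rw [abs_of_nonneg (by assumption)]; ring
      · rw [abs_of_neg (by linarith [lt_of_not_ge (by assumption)])]; ring
    have hsup : (⨆ j : Fin (n + 1), |(fun _ => c) j|) ≤ ε := by
      rw [ciSup_const, hcabs]
    have := h (fun _ => c) hsup
    rw [hexpand] at this
    have hsumc : ∑ j, toyW (n + 1) j * c = c := by
      rw [← Finset.sum_mul, hW, one_mul]
    rw [hsumc, mul_add, hzc] at this
    linarith
  · intro h Δ hΔ
    have hΔj : ∀ j, |Δ j| ≤ ε := fun j =>
      le_trans (le_ciSup (f := fun j => |Δ j|) (Set.Finite.bddAbove (Set.finite_range _)) j) hΔ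
    rw [hexpand, mul_add]
    have hb : |z.2 * ∑ j, toyW (n + 1) j * Δ j| ≤ |z.2| * ε := by
      rw [abs_mul]
      apply mul_le_mul_of_nonneg_left _ (abs_nonneg _)
      calc |∑ j, toyW (n + 1) j * Δ j| ≤ ∑ j, |toyW (n + 1) j * Δ j| :=
            Finset.abs_sum_le_sum_abs _ _
        _ ≤ ∑ j : Fin (n + 1), toyW (n + 1) j * ε := by
            apply Finset.sum_le_sum
            intro j _
            rw [abs_mul, abs_of_nonneg (toyW_nonneg n j)]
            exact mul_le_mul_of_nonneg_left (hΔj j) (toyW_nonneg n j)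
        _ = ε := by rw [← Finset.sum_mul, hW, one_mul]
    linarith [neg_abs_le (z.2 * ∑ j, toyW (n + 1) j * Δ j)]

lemma joint_key (n : ℕ) (hn : n ≠ 0) (η : ℝ) (hη : 0 < η) (ε : ℝ) (hε : η ≤ ε) :
    toyJoint (n + 1) η {z : (Fin (n + 1) → ℝ) × ℝ | ∀ Δ : Fin (n + 1) → ℝ,
        (⨆ j, |Δ j|) ≤ ε → 0 ≤ z.2 * ∑ j, toyW (n + 1) j * (z.1 j + Δ j)}
      = gaussianReal 0 ((n : ℝ≥0))⁻¹ (Set.Ici (ε - η)) := by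
  have hε0 : 0 ≤ ε := le_trans hη.le hε
  rw [set_eq n hn ε hε0]
  have hmeasSum : Measurable fun x : Fin (n + 1) → ℝ => ∑ j, toyW (n + 1) j * x j :=
    Finset.measurable_sum _ fun j _ => (measurable_pi_apply j).const_mul _
  have hS : MeasurableSet {z : (Fin (n + 1) → ℝ) × ℝ |
      |z.2| * ε ≤ z.2 * ∑ j, toyW (n + 1) j * z.1 j} := by
    apply measurableSet_le
    · exact (measurable_snd.abs).mul_const ε
    · exact measurable_snd.mul (hmeasSum.comp measurable_fst)
  unfold toyJoint
  rw [Measure.smul_apply, Measure.add_apply,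
    Measure.map_apply (show Measurable (fun x : Fin (n+1) → ℝ => (x, (1:ℝ))) from
      measurable_id.prodMk measurable_const) hS,
    Measure.map_apply (show Measurable (fun x : Fin (n+1) → ℝ => (x, (-1:ℝ))) from
      measurable_id.prodMk measurable_const) hS]
  have hpre1 : ((fun x : Fin (n + 1) → ℝ => (x, (1:ℝ))) ⁻¹'
      {z | |z.2| * ε ≤ z.2 * ∑ j, toyW (n + 1) j * z.1 j})
      = (fun x : Fin (n + 1) → ℝ => (1:ℝ) * ∑ j, toyW (n + 1) j * x j) ⁻¹' Set.Ici ε := by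
    ext x
    simp [abs_one]
  have hpre2 : ((fun x : Fin (n + 1) → ℝ => (x, (-1:ℝ))) ⁻¹'
      {z | |z.2| * ε ≤ z.2 * ∑ j, toyW (n + 1) j * z.1 j})
      = (fun x : Fin (n + 1) → ℝ => (-1:ℝ) * ∑ j, toyW (n + 1) j * x j) ⁻¹' Set.Ici ε := by
    ext x
    simp [abs_neg, abs_one]
  rw [hpre1, hpre2,
    ← Measure.map_apply (hmeasSum.const_mul _) measurableSet_Ici,
    ← Measure.map_apply (hmeasSum.const_mul _) measurableSet_Ici,
    toyCond_map n hn η 1 (Or.inl rfl), toyCond_map n hn η (-1) (Or.inr rfl)]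
  have hhalf : ∀ G : ℝ≥0∞, (1/2 : ℝ≥0∞) * (G + G) = G := by
    intro G
    rw [← two_mul, one_div, ← mul_assoc, ENNReal.inv_mul_cancel (by norm_num) (by norm_num),
      one_mul]
  rw [smul_eq_mul, hhalf]
  have hmap := gaussianReal_map_add_const (μ := 0) (v := ((n : ℝ≥0))⁻¹) η
  rw [zero_add] at hmap
  rw [← hmap, Measure.map_apply (show Measurable (fun x : ℝ => x + η) from measurable_id.add_const η) measurableSet_Ici]
  congr 1
  ext x
  simp [Set.mem_Ici, sub_le_iff_le_add]


/-- Toy-model adversarial vulnerability under the `ℓ_∞` threat model: for `ε ≥ η`,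
`acc_ε(h) = P(N(0,1/(p−1)) ≥ ε−η) ≤ exp(−(p−1)(ε−η)²/2)`, and in particular
`acc_ε(h) ≤ δ` whenever `ε ≥ η + √(2 log(1/δ)/(p−1))`. -/
theorem stmt11 (p : ℕ) (hp : 2 ≤ p) (η : ℝ) (hη : 0 < η) (ε : ℝ) (hε : η ≤ ε) :
    (toyJoint p η {z | ∀ Δ : Fin p → ℝ, (⨆ j, |Δ j|) ≤ ε →
        0 ≤ z.2 * ∑ j, toyW p j * (z.1 j + Δ j)}).toReal
      = (gaussianReal 0 ((p : ℝ≥0) - 1)⁻¹ (Set.Ici (ε - η))).toReal ∧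
    (toyJoint p η {z | ∀ Δ : Fin p → ℝ, (⨆ j, |Δ j|) ≤ ε →
        0 ≤ z.2 * ∑ j, toyW p j * (z.1 j + Δ j)}).toReal
      ≤ Real.exp (-((p : ℝ) - 1) * (ε - η) ^ 2 / 2) ∧
    ∀ δ : ℝ, 0 < δ → δ ≤ 1 →
      η + Real.sqrt (2 * Real.log (1 / δ) / ((p : ℝ) - 1)) ≤ ε →
      (toyJoint p η {z | ∀ Δ : Fin p → ℝ, (⨆ j, |Δ j|) ≤ ε →
          0 ≤ z.2 * ∑ j, toyW p j * (z.1 j + Δ j)}).toReal ≤ δ := by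
  obtain ⟨n, rfl⟩ : ∃ n, p = n + 1 := ⟨p - 1, by omega⟩
  have hn : n ≠ 0 := by omega
  have hn' : (0:ℝ) < n := by exact_mod_cast Nat.pos_of_ne_zero hn
  have hcast : ((n + 1 : ℕ) : ℝ≥0) - 1 = (n : ℝ≥0) := by
    rw [Nat.cast_add, Nat.cast_one, add_tsub_cancel_right]
  have hcastR : ((n + 1 : ℕ) : ℝ) - 1 = (n : ℝ) := by push_cast; ring
  have hkey := joint_key n hn η hη ε hε
  have hvne : ((n : ℝ≥0))⁻¹ ≠ 0 := inv_ne_zero (Nat.cast_ne_zero.mpr hn)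
  have htail := gauss_tail hvne (sub_nonneg.mpr hε)
  have hexp_eq : -(ε - η) ^ 2 / (2 * ((((n : ℝ≥0))⁻¹ : ℝ≥0) : ℝ))
      = -((↑(n + 1) : ℝ) - 1) * (ε - η) ^ 2 / 2 := by
    rw [hcastR]
    push_cast
    field_simp
  rw [hexp_eq] at htail
  have h2 : (toyJoint (n + 1) η {z | ∀ Δ : Fin (n + 1) → ℝ, (⨆ j, |Δ j|) ≤ ε →
      0 ≤ z.2 * ∑ j, toyW (n + 1) j * (z.1 j + Δ j)}).toReal
      ≤ Real.exp (-((↑(n + 1) : ℝ) - 1) * (ε - η) ^ 2 / 2) := by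
    rw [hkey]
    exact htail
  refine ⟨by rw [hkey, hcast], h2, ?_⟩
  intro δ hδ0 hδ1 hεδ
  refine le_trans h2 ?_
  rw [hcastR] at hεδ ⊢
  have hL : 0 ≤ Real.log (1 / δ) := Real.log_nonneg (by rw [le_div_iff₀ hδ0]; simpa using hδ1)
  have hq : 0 ≤ 2 * Real.log (1 / δ) / (n : ℝ) := by positivity
  have ht2 : 2 * Real.log (1 / δ) / (n : ℝ) ≤ (ε - η) ^ 2 := by
    have h1 : Real.sqrt (2 * Real.log (1 / δ) / (n : ℝ)) ≤ ε - η := by linarith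
    calc 2 * Real.log (1 / δ) / (n : ℝ)
        = Real.sqrt (2 * Real.log (1 / δ) / (n : ℝ)) ^ 2 := (Real.sq_sqrt hq).symm
      _ ≤ (ε - η) ^ 2 := by
          apply pow_le_pow_left₀ (Real.sqrt_nonneg _) h1 2
  have hlog : -(n : ℝ) * (ε - η) ^ 2 / 2 ≤ Real.log δ := by
    have : Real.log δ = -Real.log (1 / δ) := by
      rw [one_div, Real.log_inv]; ring
    rw [this]
    have h3 : 2 * Real.log (1 / δ) ≤ (ε - η) ^ 2 * (n : ℝ) := (div_le_iff₀ hn').mp ht2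
    nlinarith [h3]
  calc Real.exp (-(n : ℝ) * (ε - η) ^ 2 / 2) ≤ Real.exp (Real.log δ) :=
        Real.exp_le_exp.mpr hlog
    _ = δ := Real.exp_log hδ0
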